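/- Let m be a positive integer, Ω₁, Ω₂ > 0, ρ ∈ (0,1), and let f be the bivariate Nakagami-m joint PDF with these parameters. Then for all r₁, r₂ ≥ 0, the joint CCDF satisfies F̄(r₁,r₂) = ∫_{r₁}^∞ ∫_{r₂}^∞ f(x,y) dy dx = (2 m^m / Γ(m)) · ℋ_m( r₁/√Ω₁, √(2mρ/(1−ρ)), (r₂/√Ω₂)·√(2m/(1−ρ)) ). -/

import Mathlib

open MeasureTheory Real Finset

/-- Modified Bessel function of the first kind of nonnegative integer order. -/
noncomputable def besselI (n : ℕ) (x : ℝ) : ℝ :=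
  ∑' k : ℕ, (x / 2) ^ (2 * k + n) / (k.factorial * (k + n).factorial)

/-- Generalized Marcum Q-function of positive integer order `m`. -/
noncomputable def marcumQ (m : ℕ) (a b : ℝ) : ℝ :=
  a ^ (-((m : ℤ) - 1)) *
    ∫ x in Set.Ioi b, x ^ m * Real.exp (-(x ^ 2 + a ^ 2) / 2) * besselI (m - 1) (a * x)

/-- The incomplete integral `ℋ_m(u,γ,δ)` of the Marcum Q-function. -/
noncomputable def Hm (m : ℕ) (u γ δ : ℝ) : ℝ :=
  ∫ x in Set.Ioi u, x ^ (2 * m - 1) * Real.exp (-(m : ℝ) * x ^ 2) * marcumQ m (γ * x) δ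

/-- Joint PDF of two correlated Nakagami-`m` random variables with powers `Ω₁, Ω₂`
and power correlation coefficient `ρ`. -/
noncomputable def nakPDF (m : ℕ) (Ω₁ Ω₂ ρ : ℝ) (r₁ r₂ : ℝ) : ℝ :=
  4 * (m : ℝ) ^ (m + 1) * (r₁ * r₂) ^ m /
      (Real.Gamma m * Ω₁ * Ω₂ * (1 - ρ) * Real.sqrt (Ω₁ * Ω₂ * ρ) ^ (m - 1)) *
    Real.exp (-((m : ℝ) / (1 - ρ)) * (r₁ ^ 2 / Ω₁ + r₂ ^ 2 / Ω₂)) *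
    besselI (m - 1) (2 * m * Real.sqrt ρ * r₁ * r₂ / (Real.sqrt (Ω₁ * Ω₂) * (1 - ρ)))

theorem nakagami_ccdf_eq_Hm (m : ℕ) (hm : 0 < m) (Ω₁ Ω₂ : ℝ) (hΩ₁ : 0 < Ω₁) (hΩ₂ : 0 < Ω₂)
    (ρ : ℝ) (hρ : ρ ∈ Set.Ioo (0 : ℝ) 1) (r₁ r₂ : ℝ) (h₁ : 0 ≤ r₁) (h₂ : 0 ≤ r₂) :
    (∫ x in Set.Ioi r₁, ∫ y in Set.Ioi r₂, nakPDF m Ω₁ Ω₂ ρ x y) =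
      2 * (m : ℝ) ^ m / Real.Gamma m *
        Hm m (r₁ / Real.sqrt Ω₁) (Real.sqrt (2 * m * ρ / (1 - ρ)))
          (r₂ / Real.sqrt Ω₂ * Real.sqrt (2 * m / (1 - ρ))) := by
  obtain ⟨n, rfl⟩ : ∃ n, m = n + 1 := ⟨m - 1, (Nat.succ_pred_eq_of_pos hm).symm⟩
  obtain ⟨hρ0, hρ1⟩ := hρ
  have hε : (0:ℝ) < 1 - ρ := by linarith
  have hM : (0:ℝ) < ((n+1 : ℕ) : ℝ) := by positivity
  set M : ℝ := ((n+1 : ℕ) : ℝ) with hMdef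
  have hA : (0:ℝ) < Real.sqrt Ω₁ := Real.sqrt_pos.mpr hΩ₁
  have hB : (0:ℝ) < Real.sqrt Ω₂ := Real.sqrt_pos.mpr hΩ₂
  set A := Real.sqrt Ω₁ with hAdef
  set B := Real.sqrt Ω₂ with hBdef
  have hA2 : A^2 = Ω₁ := Real.sq_sqrt hΩ₁.le
  have hB2 : B^2 = Ω₂ := Real.sq_sqrt hΩ₂.le
  have hAB : Real.sqrt (Ω₁ * Ω₂) = A * B := by
    rw [Real.sqrt_mul hΩ₁.le, hAdef, hBdef]
  have hρs : (0:ℝ) < Real.sqrt ρ := Real.sqrt_pos.mpr hρ0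
  set w := Real.sqrt ((1-ρ) / (2*M)) with hwdef
  have hw : (0:ℝ) < w := Real.sqrt_pos.mpr (by positivity)
  have hw2 : w^2 = (1-ρ)/(2*M) := Real.sq_sqrt (by positivity)
  set s := B * w with hsdef
  have hs : (0:ℝ) < s := mul_pos hB hw
  set γ := Real.sqrt (2 * M * ρ / (1-ρ)) with hγdef
  have hγ : (0:ℝ) < γ := Real.sqrt_pos.mpr (by positivity)
  have hγ2 : γ^2 = 2*M*ρ/(1-ρ) := Real.sq_sqrt (by positivity)
  set δ := r₂ / B * Real.sqrt (2 * M / (1-ρ)) with hδdef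
  have hwγ : w * γ = Real.sqrt ρ := by
    rw [hwdef, hγdef, ← Real.sqrt_mul (by positivity)]
    rw [show (1-ρ)/(2*M) * (2*M*ρ/(1-ρ)) = ρ by field_simp]
  have hsδ : s * δ = r₂ := by
    have h1 : w * Real.sqrt (2*M/(1-ρ)) = 1 := by
      rw [hwdef, ← Real.sqrt_mul (by positivity),
        show (1-ρ)/(2*M) * (2*M/(1-ρ)) = 1 by field_simp, Real.sqrt_one]
    calc s * δ = r₂ * (w * Real.sqrt (2*M/(1-ρ))) * (B / B) := by
          rw [hsdef, hδdef]; ring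
      _ = r₂ := by rw [h1, div_self hB.ne']; ring
  have hkey : 2 * M * Real.sqrt ρ * s = γ * (B * (1-ρ)) := by
    rw [hsdef, hwdef, hγdef]
    have h1 : 2*M*Real.sqrt ρ * (B * Real.sqrt ((1-ρ)/(2*M)))
        = B * Real.sqrt ((2*M)^2 * ρ * ((1-ρ)/(2*M))) := by
      rw [Real.sqrt_mul (by positivity), Real.sqrt_mul (by positivity),
        Real.sqrt_sq (by positivity)]
      ring
    have h2 : Real.sqrt (2*M*ρ/(1-ρ)) * (B * (1-ρ))
        = B * Real.sqrt (2*M*ρ/(1-ρ) * (1-ρ)^2) := by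
      rw [Real.sqrt_mul (by positivity), Real.sqrt_sq hε.le]
      ring
    rw [h1, h2]
    congr 2
    field_simp
  -- the Marcum Q integral identity
  have hmq : ∀ a : ℝ, 0 < a →
      a^n * marcumQ (n+1) a δ
        = ∫ t in Set.Ioi δ, t^(n+1) * Real.exp (-(t^2+a^2)/2) * besselI n (a*t) := by
    intro a ha
    rw [marcumQ]
    simp only [Nat.add_sub_cancel]
    rw [show (-((((n+1:ℕ)):ℤ) - 1)) = -(n:ℤ) by push_cast; ring,
      zpow_neg, zpow_natCast, ← mul_assoc, mul_inv_cancel₀ (pow_ne_zero _ ha.ne'), one_mul]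
  -- inner integral
  have hinner : ∀ x ∈ Set.Ioi r₁,
      (∫ y in Set.Ioi r₂, nakPDF (n+1) Ω₁ Ω₂ ρ x y)
        = (4 * M ^ (n+1+1) / (Real.Gamma M * Ω₁ * Ω₂ * (1 - ρ) * Real.sqrt (Ω₁ * Ω₂ * ρ) ^ n)
            * s^(n+2) * γ^n / A^n)
          * (x^(2*n+1) * Real.exp (-M * (x/A)^2) * marcumQ (n+1) (γ * (x/A)) δ) := by
    intro x hx
    have hx0 : 0 < x := lt_of_le_of_lt h₁ hx
    set a := γ * (x / A) with hadef
    have ha : 0 < a := by positivity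
    set K : ℝ := 4 * M ^ (n+1+1) / (Real.Gamma M * Ω₁ * Ω₂ * (1 - ρ) * Real.sqrt (Ω₁ * Ω₂ * ρ) ^ n)
      with hKdef
    have key : ∀ t : ℝ, nakPDF (n+1) Ω₁ Ω₂ ρ x (s*t)
        = (K * x^(n+1) * s^(n+1) * Real.exp (-(M/(1-ρ)) * (x^2/Ω₁)) * Real.exp (a^2/2))
          * (t^(n+1) * Real.exp (-(t^2 + a^2)/2) * besselI n (a*t)) := by
      intro t
      simp only [nakPDF, Nat.add_sub_cancel, ← hMdef]
      have harg : 2 * M * Real.sqrt ρ * x * (s*t) / (Real.sqrt (Ω₁*Ω₂) * (1-ρ)) = a*t := by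
        rw [hAB, hadef]
        field_simp
        linear_combination t * hkey
      rw [harg]
      have ha2 : a^2 = 2*M*ρ/(1-ρ) * (x^2/Ω₁) := by
        rw [hadef, mul_pow, div_pow, hA2, hγ2]
      have hexp : Real.exp (-(M/(1-ρ)) * (x^2/Ω₁ + (s*t)^2/Ω₂))
          = Real.exp (-(M/(1-ρ)) * (x^2/Ω₁)) * Real.exp (a^2/2)
            * Real.exp (-(t^2 + a^2)/2) := by
        rw [← Real.exp_add, ← Real.exp_add]
        congr 1
        have hst : (s*t)^2 = (1-ρ)/(2*M) * t^2 * Ω₂ := by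
          rw [mul_pow, hsdef, mul_pow, hw2, hB2]; ring
        rw [hst, ha2]
        field_simp
        ring
      rw [hexp, hKdef]
      ring
    calc (∫ y in Set.Ioi r₂, nakPDF (n+1) Ω₁ Ω₂ ρ x y)
        = s • ∫ t in Set.Ioi δ, nakPDF (n+1) Ω₁ Ω₂ ρ x (s*t) := by
          rw [MeasureTheory.integral_comp_mul_left_Ioi (fun y => nakPDF (n+1) Ω₁ Ω₂ ρ x y) δ hs,
            hsδ, smul_smul, mul_inv_cancel₀ hs.ne', one_smul]
      _ = s * ((K * x^(n+1) * s^(n+1) * Real.exp (-(M/(1-ρ)) * (x^2/Ω₁)) * Real.exp (a^2/2))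
            * ∫ t in Set.Ioi δ, t^(n+1) * Real.exp (-(t^2 + a^2)/2) * besselI n (a*t)) := by
          rw [smul_eq_mul]
          congr 1
          simp_rw [key]
          rw [MeasureTheory.integral_const_mul]
      _ = s * ((K * x^(n+1) * s^(n+1) * Real.exp (-(M/(1-ρ)) * (x^2/Ω₁)) * Real.exp (a^2/2))
            * (a^n * marcumQ (n+1) a δ)) := by rw [hmq a ha]
      _ = (K * s^(n+2) * γ^n / A^n)
            * (x^(2*n+1) * Real.exp (-M * (x/A)^2) * marcumQ (n+1) a δ) := by
          have hexp2 : Real.exp (-(M/(1-ρ)) * (x^2/Ω₁)) * Real.exp (a^2/2)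
              = Real.exp (-M * (x/A)^2) := by
            rw [← Real.exp_add]
            congr 1
            have ha2 : a^2 = 2*M*ρ/(1-ρ) * (x^2/Ω₁) := by
              rw [hadef, mul_pow, div_pow, hA2, hγ2]
            rw [ha2, div_pow, hA2]
            field_simp
            ring
          have han : a^n = γ^n * x^n / A^n := by
            rw [hadef, mul_pow, div_pow]; ring
          rw [← hexp2, han]
          field_simp
          ring
  rw [MeasureTheory.setIntegral_congr_fun measurableSet_Ioi hinner,
    MeasureTheory.integral_const_mul]
  -- outer change of variables
  have houter : (∫ x in Set.Ioi r₁,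
        x^(2*n+1) * Real.exp (-M * (x/A)^2) * marcumQ (n+1) (γ * (x/A)) δ)
      = A^(2*n+2) * Hm (n+1) (r₁/A) γ δ := by
    have h := MeasureTheory.integral_comp_mul_left_Ioi
      (fun x => x^(2*n+1) * Real.exp (-M * (x/A)^2) * marcumQ (n+1) (γ * (x/A)) δ)
      (r₁/A) hA
    rw [show A * (r₁/A) = r₁ by field_simp] at h
    have h2 : (∫ x in Set.Ioi r₁,
          x^(2*n+1) * Real.exp (-M * (x/A)^2) * marcumQ (n+1) (γ * (x/A)) δ)
        = A • ∫ u in Set.Ioi (r₁/A),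
            (A*u)^(2*n+1) * Real.exp (-M * ((A*u)/A)^2) * marcumQ (n+1) (γ * ((A*u)/A)) δ := by
      rw [h, smul_smul, mul_inv_cancel₀ hA.ne', one_smul]
    rw [h2, Hm]
    simp only [show 2*(n+1)-1 = 2*n+1 from by omega, ← hMdef]
    have hcan : ∀ u : ℝ, A * u / A = u := fun u => by field_simp
    simp_rw [hcan, mul_pow]
    rw [smul_eq_mul, ← MeasureTheory.integral_const_mul, ← MeasureTheory.integral_const_mul]
    congr 1
    funext u
    ring
  rw [houter]
  rw [← mul_assoc]
  congr 1
  -- constants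
  have hsqρ : Real.sqrt (Ω₁*Ω₂*ρ) = A * B * Real.sqrt ρ := by
    rw [Real.sqrt_mul (by positivity), hAB]
  have hΓ : 0 < Real.Gamma M := Real.Gamma_pos_of_pos hM
  have hwγn : s^(n+2) * γ^n = B^(n+2) * ((1-ρ)/(2*M)) * Real.sqrt ρ ^ n := by
    calc s^(n+2) * γ^n = B^(n+2) * (w^2 * (w*γ)^n) := by
          rw [hsdef, mul_pow, mul_pow]; ring
      _ = _ := by rw [hwγ, hw2]; ring
  rw [hsqρ]
  rw [show (4 * M ^ (n+1+1) / (Real.Gamma M * Ω₁ * Ω₂ * (1 - ρ) * (A * B * Real.sqrt ρ) ^ n)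
        * s^(n+2) * γ^n / A^n) * A^(2*n+2)
      = (4 * M ^ (n+1+1) / (Real.Gamma M * Ω₁ * Ω₂ * (1 - ρ) * (A * B * Real.sqrt ρ) ^ n)
        * (s^(n+2) * γ^n) / A^n) * A^(2*n+2) by ring, hwγn]
  rw [← hA2, ← hB2]
  have hΓne : Real.Gamma M ≠ 0 := hΓ.ne'
  field_simp
  ring
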